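/- Let G be a crossed interval group and K a congruence family on G. Then the closure K̄, defined by K̄_φ := {x ∈ RSt^G_φ : ψ*(x) ∈ K_{φ∘ψ} for every ψ such that φ∘ψ is defined and active}, is again a congruence family on G. -/

import Mathlib

open CategoryTheory

/-! ## The category of intervals ∇

Objects of `∇` are the totally ordered sets `⟪n⟫ = {-∞, 1, …, n, ∞}`, which we
encode as `Fin (n + 2)` (with `0` playing the role of `-∞` and `Fin.last (n+1)`
the role of `∞`).  Morphisms are order-preserving maps sending `-∞` to `-∞` and
`∞` to `∞`. -/

/-- The interior `{1, …, n}` of `⟪n⟫ = Fin (n + 2)`, i.e. everything except the two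
endpoints `-∞` and `∞`. -/
def nablaInterior (n : ℕ) : Set (Fin (n + 2)) :=
  {i | i ≠ 0 ∧ i ≠ Fin.last (n + 1)}

/-- A morphism `⟪m⟫ → ⟪n⟫` of the category of intervals `∇`: an order-preserving map
sending `-∞` to `-∞` and `∞` to `∞`. -/
structure NablaHom (m n : ℕ) where
  toFun : Fin (m + 2) → Fin (n + 2)
  monotone' : Monotone toFun
  map_bot' : toFun 0 = 0
  map_top' : toFun (Fin.last (m + 1)) = Fin.last (n + 1)

namespace NablaHom

@[ext]
theorem ext {m n : ℕ} {f g : NablaHom m n} (h : ∀ i, f.toFun i = g.toFun i) : f = g := by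
  cases f; cases g
  simp only [mk.injEq]
  funext i
  exact h i

/-- The identity morphism of `⟪n⟫`. -/
def id (n : ℕ) : NablaHom n n :=
  ⟨fun i => i, fun _ _ h => h, rfl, rfl⟩

/-- Composition `ψ ∘ φ` of morphisms of `∇`. -/
def comp {l m n : ℕ} (ψ : NablaHom m n) (φ : NablaHom l m) : NablaHom l n where
  toFun := ψ.toFun ∘ φ.toFun
  monotone' := ψ.monotone'.comp φ.monotone'
  map_bot' := by
    show ψ.toFun (φ.toFun 0) = 0
    rw [φ.map_bot', ψ.map_bot']
  map_top' := by
    show ψ.toFun (φ.toFun (Fin.last (l + 1))) = Fin.last (n + 1)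
    rw [φ.map_top', ψ.map_top']

@[simp] theorem comp_id {m n : ℕ} (φ : NablaHom m n) : φ.comp (id m) = φ := rfl

@[simp] theorem id_comp {m n : ℕ} (φ : NablaHom m n) : (id n).comp φ = φ := rfl

theorem comp_assoc {k l m n : ℕ} (χ : NablaHom m n) (ψ : NablaHom l m) (φ : NablaHom k l) :
    (χ.comp ψ).comp φ = χ.comp (ψ.comp φ) := rfl

/-- A morphism `φ : ⟪m⟫ → ⟪n⟫` of `∇` is *active* if `φ⁻¹{-∞} = {-∞}` and
`φ⁻¹{∞} = {∞}`. -/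
def Active {m n : ℕ} (φ : NablaHom m n) : Prop :=
  (∀ i, φ.toFun i = 0 → i = 0) ∧
  (∀ i, φ.toFun i = Fin.last (n + 1) → i = Fin.last (m + 1))

/-- A morphism `φ : ⟪m⟫ → ⟪n⟫` of `∇` is *inert* if it restricts to a bijection
`φ⁻¹({1,…,n}) → {1,…,n}`. -/
def Inert {m n : ℕ} (φ : NablaHom m n) : Prop :=
  Set.BijOn φ.toFun (φ.toFun ⁻¹' nablaInterior n) (nablaInterior n)

end NablaHom

/-- The category of intervals `∇`. -/
def Nabla : Type := ℕ

instance : Category Nabla where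
  Hom m n := NablaHom m n
  id n := NablaHom.id n
  comp f g := g.comp f
  id_comp f := NablaHom.comp_id f
  comp_id f := NablaHom.id_comp f
  assoc _ _ _ := rfl

/-! ## Crossed interval groups -/

/-- A crossed interval group `G`: a presheaf of groups `n ↦ G_n` on `∇` (with
`φ* = map φ : G_n → G_m` for `φ : ⟪m⟫ → ⟪n⟫`) together with a left action of the
group `G_n` on each hom-set `∇(⟪m⟫, ⟪n⟫)` (written `φ^x = act x φ`), subject to the
crossed compatibilities `φ*(x y) = (φ^y)*(x) · φ*(y)` and
`(φ ∘ ψ)^x = φ^x ∘ ψ^{φ*(x)}`. -/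
structure CrossedIntervalGroup where
  grp : ℕ → Type
  [groupStr : ∀ n, Group (grp n)]
  map : ∀ {m n : ℕ}, NablaHom m n → grp n → grp m
  act : ∀ {m n : ℕ}, grp n → NablaHom m n → NablaHom m n
  map_id : ∀ {n : ℕ} (x : grp n), map (NablaHom.id n) x = x
  map_comp : ∀ {l m n : ℕ} (ψ : NablaHom m n) (φ : NablaHom l m) (x : grp n),
      map (ψ.comp φ) x = map φ (map ψ x)
  act_one : ∀ {m n : ℕ} (φ : NablaHom m n), act 1 φ = φ
  act_mul : ∀ {m n : ℕ} (x y : grp n) (φ : NablaHom m n),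
      act (x * y) φ = act x (act y φ)
  act_id : ∀ {n : ℕ} (x : grp n), act x (NablaHom.id n) = NablaHom.id n
  map_mul : ∀ {m n : ℕ} (φ : NablaHom m n) (x y : grp n),
      map φ (x * y) = map (act y φ) x * map φ y
  act_comp : ∀ {l m n : ℕ} (x : grp n) (φ : NablaHom m n) (ψ : NablaHom l m),
      act x (φ.comp ψ) = (act x φ).comp (act (map φ x) ψ)

attribute [instance] CrossedIntervalGroup.groupStr

/-! ## Right stabilizers and congruence families -/

/-- The subgroup `RSt^G_φ ⊆ G_m` of right stabilizers of `φ : ⟪m⟫ → ⟪n⟫`: elements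
`x ∈ G_m` with `φ ∘ ψ^x = φ ∘ ψ` for every `ψ : ⟪l⟫ → ⟪m⟫`. -/
def RSt (G : CrossedIntervalGroup) {m n : ℕ} (φ : NablaHom m n) : Subgroup (G.grp m) where
  carrier := {x | ∀ (l : ℕ) (ψ : NablaHom l m), φ.comp (G.act x ψ) = φ.comp ψ}
  one_mem' := by
    intro l ψ
    rw [G.act_one]
  mul_mem' := by
    intro a b ha hb l ψ
    rw [G.act_mul]
    exact (ha l (G.act b ψ)).trans (hb l ψ)
  inv_mem' := by
    intro a ha l ψ
    have h := ha l (G.act a⁻¹ ψ)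
    rw [← G.act_mul, mul_inv_cancel, G.act_one] at h
    exact h.symm

/-- A congruence family `K = {K_φ}` on a crossed interval group `G`. -/
structure CongruenceFamily (G : CrossedIntervalGroup) where
  K : ∀ {m n : ℕ}, NablaHom m n → Subgroup (G.grp m)
  le_rst : ∀ {m n : ℕ} (φ : NablaHom m n), K φ ≤ RSt G φ
  le_post : ∀ {m n k : ℕ} (φ : NablaHom m n) (χ : NablaHom n k), K φ ≤ K (χ.comp φ)
  map_pre : ∀ {l m n : ℕ} (φ : NablaHom m n) (ψ : NablaHom l m),
      ∀ x ∈ K φ, G.map ψ x ∈ K (φ.comp ψ)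
  conj_act : ∀ {m n : ℕ} (φ : NablaHom m n) (y : G.grp n) (x : G.grp m),
      x ∈ K (G.act y φ) ↔ ∃ u ∈ K φ, x = G.map φ y * u * (G.map φ y)⁻¹

/-! ## Closure of a congruence family, and the minimal family Inr -/

/-- The closure `K̄_φ` of a congruence family `K` at `φ`:
`x ∈ K̄_φ` iff `x ∈ RSt^G_φ` and `ψ*(x) ∈ K_{φ∘ψ}` for every `ψ` such that `φ∘ψ` is
defined and active. -/
def closureSet (G : CrossedIntervalGroup) (K : CongruenceFamily G) {m n : ℕ}
    (φ : NablaHom m n) : Set (G.grp m) :=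
  {x | x ∈ RSt G φ ∧
    ∀ (l : ℕ) (ψ : NablaHom l m), (φ.comp ψ).Active → G.map ψ x ∈ K.K (φ.comp ψ)}

/-- A congruence family is *proper* if it coincides with its closure. -/
def CongruenceFamily.IsProper {G : CrossedIntervalGroup} (K : CongruenceFamily G) : Prop :=
  ∀ {m n : ℕ} (φ : NablaHom m n), (K.K φ : Set (G.grp m)) = closureSet G K φ

/-- `Inr^G_φ`, the closure of the trivial congruence family at `φ`:
`x ∈ Inr^G_φ` iff `x ∈ RSt^G_φ` and `ψ*(x) = e` for every `ψ` such that `φ∘ψ` is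
defined and active. -/
def InrSet (G : CrossedIntervalGroup) {m n : ℕ} (φ : NablaHom m n) : Set (G.grp m) :=
  {x | x ∈ RSt G φ ∧
    ∀ (l : ℕ) (ψ : NablaHom l m), (φ.comp ψ).Active → G.map ψ x = 1}

section Aux

variable (G : CrossedIntervalGroup)

theorem CIG.map_one {m n : ℕ} (φ : NablaHom m n) : G.map φ (1 : G.grp n) = 1 := by
  have h := G.map_mul φ 1 1
  rw [one_mul, G.act_one] at h
  exact (mul_eq_left (a := G.map φ 1)).mp h.symm

theorem CIG.act_act_inv {m n : ℕ} (y : G.grp n) (χ : NablaHom m n) :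
    G.act y⁻¹ (G.act y χ) = χ := by
  rw [← G.act_mul, inv_mul_cancel, G.act_one]

theorem CIG.act_inv_act {m n : ℕ} (y : G.grp n) (χ : NablaHom m n) :
    G.act y (G.act y⁻¹ χ) = χ := by
  rw [← G.act_mul, mul_inv_cancel, G.act_one]

/-- The morphism `⟪1⟫ → ⟪l⟫` sending the unique interior point `1` to `j`. -/
def hom1 {l : ℕ} (j : Fin (l + 2)) : NablaHom 1 l where
  toFun i := if i = 0 then 0 else if i = Fin.last 2 then Fin.last (l + 1) else j
  monotone' := by
    intro a b hab
    have hj := j.isLt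
    fin_cases a <;> fin_cases b <;> simp_all [Fin.le_def, Fin.last, Fin.ext_iff] <;> omega
  map_bot' := by simp
  map_top' := by simp [Fin.last]

theorem hom1_one {l : ℕ} (j : Fin (l + 2)) : (hom1 j).toFun 1 = j := by
  have h1 : (1 : Fin 3) ≠ 0 := by decide
  have h2 : (1 : Fin 3) ≠ Fin.last 2 := by decide
  simp [hom1, h1, h2]

theorem hom1_eta {l : ℕ} (θ : NablaHom 1 l) : θ = hom1 (θ.toFun 1) := by
  refine NablaHom.ext fun i => ?_
  fin_cases i
  · exact θ.map_bot'.trans (by simp [hom1])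
  · exact (hom1_one _).symm
  · exact θ.map_top'.trans (by simp [hom1, Fin.last])

theorem comp_hom1 {l n : ℕ} (χ : NablaHom l n) (j : Fin (l + 2)) :
    χ.comp (hom1 j) = hom1 (χ.toFun j) := by
  refine NablaHom.ext fun i => ?_
  fin_cases i
  · show χ.toFun ((hom1 j).toFun 0) = (hom1 (χ.toFun j)).toFun 0
    rw [(hom1 j).map_bot', χ.map_bot', (hom1 (χ.toFun j)).map_bot']
  · show χ.toFun ((hom1 j).toFun 1) = (hom1 (χ.toFun j)).toFun 1
    rw [hom1_one, hom1_one]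
  · show χ.toFun ((hom1 j).toFun (Fin.last 2)) = (hom1 (χ.toFun j)).toFun (Fin.last 2)
    rw [(hom1 j).map_top', χ.map_top', (hom1 (χ.toFun j)).map_top']

/-- The unique morphism `⟪0⟫ → ⟪l⟫`. -/
def iotaH (l : ℕ) : NablaHom 0 l where
  toFun i := if i = 0 then 0 else Fin.last (l + 1)
  monotone' := by
    intro a b hab
    fin_cases a <;> fin_cases b <;> simp_all [Fin.le_def, Fin.last, Fin.ext_iff]
  map_bot' := by simp
  map_top' := by simp [Fin.last]

theorem nabla0_subsingleton {l : ℕ} (θ θ' : NablaHom 0 l) : θ = θ' := by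
  refine NablaHom.ext fun i => ?_
  fin_cases i
  · exact θ.map_bot'.trans θ'.map_bot'.symm
  · exact θ.map_top'.trans θ'.map_top'.symm

end Aux

section Active

variable (G : CrossedIntervalGroup)

/-- The endpoint property of a morphism `⟪1⟫ → ⟪l⟫`: its value at `1` is an endpoint. -/
def EndPt {l : ℕ} (θ : NablaHom 1 l) : Prop :=
  θ.toFun 1 = 0 ∨ θ.toFun 1 = Fin.last (l + 1)

theorem endPt_iff_factor {l : ℕ} (θ : NablaHom 1 l) :
    EndPt θ ↔ ∃ c : NablaHom 1 0, θ = (iotaH l).comp c := by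
  constructor
  · rintro (h | h)
    · refine ⟨hom1 0, ?_⟩
      rw [comp_hom1, (iotaH l).map_bot', ← h, ← hom1_eta]
    · refine ⟨hom1 (Fin.last 1), ?_⟩
      have : (iotaH l).toFun (Fin.last 1) = Fin.last (l + 1) := (iotaH l).map_top'
      rw [comp_hom1, this, ← h, ← hom1_eta]
  · rintro ⟨c, rfl⟩
    show (iotaH l).toFun (c.toFun 1) = 0 ∨ (iotaH l).toFun (c.toFun 1) = Fin.last (l + 1)
    rcases Fin.exists_fin_two.mp ⟨c.toFun 1, rfl⟩ with h | h
    · left; rw [h]; exact (iotaH l).map_bot'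
    · right; rw [h]
      exact (iotaH l).map_top'

theorem endPt_act {l : ℕ} (z : G.grp l) (θ : NablaHom 1 l) (h : EndPt θ) :
    EndPt (G.act z θ) := by
  rcases (endPt_iff_factor θ).mp h with ⟨c, rfl⟩
  rw [G.act_comp]
  have : G.act z (iotaH l) = iotaH l := nabla0_subsingleton _ _
  rw [this]
  exact (endPt_iff_factor _).mpr ⟨_, rfl⟩

theorem endPt_act_iff {l : ℕ} (z : G.grp l) (θ : NablaHom 1 l) :
    EndPt (G.act z θ) ↔ EndPt θ := by
  constructor
  · intro h
    have := endPt_act G z⁻¹ _ h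
    rwa [CIG.act_act_inv] at this
  · exact endPt_act G z θ

theorem act_endpoint_preimage {l n : ℕ} (y : G.grp n) (χ : NablaHom l n) (hχ : χ.Active)
    (i : Fin (l + 2))
    (hi : (G.act y χ).toFun i = 0 ∨ (G.act y χ).toFun i = Fin.last (n + 1)) :
    i = 0 ∨ i = Fin.last (l + 1) := by
  set χ' := G.act y χ with hχ'
  set g := G.map χ y with hg
  set ψ : NablaHom 1 l := G.act g⁻¹ (hom1 i) with hψ
  have hθ : G.act g ψ = hom1 i := CIG.act_inv_act G g (hom1 i)
  have key : χ'.comp (hom1 i) = G.act y (χ.comp ψ) := by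
    rw [G.act_comp y χ ψ, ← hg, hθ, ← hχ']
  -- the composite χ' ∘ hom1 i is hom1 (χ' i), which has EndPt by hi
  have hend : EndPt (G.act y (χ.comp ψ)) := by
    rw [← key, comp_hom1]
    rcases hi with h | h <;> rw [h]
    · left; exact hom1_one _
    · right; exact hom1_one _
  have hend2 : EndPt (χ.comp ψ) := (endPt_act_iff G y _).mp hend
  -- hence χ (ψ 1) is an endpoint, so ψ 1 is an endpoint by activity of χ
  have hψ1 : EndPt ψ := by
    rcases hend2 with h | h
    · left; exact hχ.1 _ h
    · right; exact hχ.2 _ h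
  -- hence i = (act g ψ) 1 is an endpoint
  have : EndPt (G.act g ψ) := endPt_act G g ψ hψ1
  rw [hθ] at this
  rcases this with h | h
  · left; rw [← hom1_one i, h]
  · right; rw [← hom1_one i, h]

theorem fin_last_ne_zero (n : ℕ) : Fin.last (n + 1) ≠ (0 : Fin (n + 2)) := by
  simp [Fin.ext_iff]

theorem act_active {l n : ℕ} (y : G.grp n) (χ : NablaHom l n) (h : χ.Active) :
    (G.act y χ).Active := by
  constructor
  · intro i hi
    rcases act_endpoint_preimage G y χ h i (Or.inl hi) with h0 | hl
    · exact h0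
    · exfalso
      rw [hl, (G.act y χ).map_top'] at hi
      exact fin_last_ne_zero n hi
  · intro i hi
    rcases act_endpoint_preimage G y χ h i (Or.inr hi) with h0 | hl
    · exfalso
      rw [h0, (G.act y χ).map_bot'] at hi
      exact fin_last_ne_zero n hi.symm
    · exact hl

theorem active_of_comp {l m n : ℕ} (χ : NablaHom m n) (θ : NablaHom l m)
    (h : (χ.comp θ).Active) : θ.Active := by
  constructor
  · intro i hi
    exact h.1 i (by show χ.toFun (θ.toFun i) = 0; rw [hi, χ.map_bot'])
  · intro i hi
    exact h.2 i (by show χ.toFun (θ.toFun i) = Fin.last (n + 1); rw [hi, χ.map_top'])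

end Active

section Closure

variable (G : CrossedIntervalGroup) (K : CongruenceFamily G)

/-- The closure of `K` at `φ`, as a subgroup. -/
def closureSubgroup {m n : ℕ} (φ : NablaHom m n) : Subgroup (G.grp m) where
  carrier := closureSet G K φ
  one_mem' := ⟨(RSt G φ).one_mem, fun l ψ _ => by
    rw [CIG.map_one]; exact (K.K (φ.comp ψ)).one_mem⟩
  mul_mem' := by
    rintro a b ⟨ha1, ha2⟩ ⟨hb1, hb2⟩
    refine ⟨(RSt G φ).mul_mem ha1 hb1, ?_⟩
    intro l ψ h
    rw [G.map_mul]
    have e : φ.comp (G.act b ψ) = φ.comp ψ := hb1 l ψ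
    have h' : (φ.comp (G.act b ψ)).Active := by rw [e]; exact h
    have hm := ha2 l (G.act b ψ) h'
    rw [e] at hm
    exact (K.K (φ.comp ψ)).mul_mem hm (hb2 l ψ h)
  inv_mem' := by
    rintro a ⟨ha1, ha2⟩
    refine ⟨(RSt G φ).inv_mem ha1, ?_⟩
    intro l ψ h
    have hinv : a⁻¹ ∈ RSt G φ := (RSt G φ).inv_mem ha1
    have e : φ.comp (G.act a⁻¹ ψ) = φ.comp ψ := hinv l ψ
    have h' : (φ.comp (G.act a⁻¹ ψ)).Active := by rw [e]; exact h
    have hm := ha2 l (G.act a⁻¹ ψ) h'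
    rw [e] at hm
    have key : G.map (G.act a⁻¹ ψ) a * G.map ψ a⁻¹ = 1 := by
      rw [← G.map_mul ψ a a⁻¹, mul_inv_cancel, CIG.map_one]
    have e2 : (G.map (G.act a⁻¹ ψ) a)⁻¹ = G.map ψ a⁻¹ := inv_eq_of_mul_eq_one_right key
    rw [← e2]
    exact (K.K (φ.comp ψ)).inv_mem hm

theorem mem_closureSubgroup {m n : ℕ} (φ : NablaHom m n) (x : G.grp m) :
    x ∈ closureSubgroup G K φ ↔ x ∈ closureSet G K φ := Iff.rfl

theorem rst_conj {m n : ℕ} (φ : NablaHom m n) (y : G.grp n) (u : G.grp m)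
    (hu : u ∈ RSt G φ) :
    G.map φ y * u * (G.map φ y)⁻¹ ∈ RSt G (G.act y φ) := by
  intro l ψ
  have hact : G.act (G.map φ y * u * (G.map φ y)⁻¹) ψ
      = G.act (G.map φ y) (G.act u (G.act (G.map φ y)⁻¹ ψ)) := by
    rw [← G.act_mul, ← G.act_mul]
  calc (G.act y φ).comp (G.act (G.map φ y * u * (G.map φ y)⁻¹) ψ)
      = (G.act y φ).comp (G.act (G.map φ y) (G.act u (G.act (G.map φ y)⁻¹ ψ))) := by
        rw [hact]
    _ = G.act y (φ.comp (G.act u (G.act (G.map φ y)⁻¹ ψ))) := (G.act_comp y φ _).symm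
    _ = G.act y (φ.comp (G.act (G.map φ y)⁻¹ ψ)) := by rw [hu _ _]
    _ = (G.act y φ).comp (G.act (G.map φ y) (G.act (G.map φ y)⁻¹ ψ)) := G.act_comp y φ _
    _ = (G.act y φ).comp ψ := by rw [CIG.act_inv_act]

theorem conj_map {l m n : ℕ} (φ : NablaHom m n) (ψ : NablaHom l m) (y : G.grp n)
    (u : G.grp m) (hu : u ∈ RSt G φ) :
    G.map (G.act (G.map φ y) ψ) (G.map φ y * u * (G.map φ y)⁻¹)
      = G.map ψ (G.map φ y) * G.map ψ u * (G.map ψ (G.map φ y))⁻¹ := by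
  have e0 : G.act (G.map φ y)⁻¹ (G.act (G.map φ y) ψ) = ψ := CIG.act_act_inv G _ ψ
  have e1 : G.map (G.act (G.map φ y) ψ) (G.map φ y * u * (G.map φ y)⁻¹)
      = G.map (G.act (G.map φ y)⁻¹ (G.act (G.map φ y) ψ)) (G.map φ y * u)
        * G.map (G.act (G.map φ y) ψ) (G.map φ y)⁻¹ :=
    G.map_mul (G.act (G.map φ y) ψ) (G.map φ y * u) (G.map φ y)⁻¹
  have e2 : G.map ψ (G.map φ y * u) = G.map (G.act u ψ) (G.map φ y) * G.map ψ u :=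
    G.map_mul ψ (G.map φ y) u
  have e3 : G.map (G.act u ψ) (G.map φ y) = G.map ψ (G.map φ y) := by
    rw [← G.map_comp φ (G.act u ψ) y, hu _ ψ, G.map_comp φ ψ y]
  have e4 : G.map (G.act (G.map φ y) ψ) (G.map φ y)⁻¹ = (G.map ψ (G.map φ y))⁻¹ := by
    have key : G.map (G.act (G.map φ y)⁻¹ (G.act (G.map φ y) ψ)) (G.map φ y)
        * G.map (G.act (G.map φ y) ψ) (G.map φ y)⁻¹ = 1 := by
      rw [← G.map_mul (G.act (G.map φ y) ψ) (G.map φ y) (G.map φ y)⁻¹, mul_inv_cancel,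
        CIG.map_one]
    rw [e0] at key
    exact (inv_eq_of_mul_eq_one_right key).symm
  rw [e1, e0, e2, e3, e4]

theorem closure_conj {m n : ℕ} (φ : NablaHom m n) (y : G.grp n) (u : G.grp m)
    (hu : u ∈ closureSet G K φ) :
    G.map φ y * u * (G.map φ y)⁻¹ ∈ closureSet G K (G.act y φ) := by
  obtain ⟨hu1, hu2⟩ := hu
  refine ⟨rst_conj G φ y u hu1, ?_⟩
  intro l θ hθ
  have hθψ : θ = G.act (G.map φ y) (G.act (G.map φ y)⁻¹ θ) := (CIG.act_inv_act G _ θ).symm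
  set ψ : NablaHom l m := G.act (G.map φ y)⁻¹ θ with hψ
  have hcomp : (G.act y φ).comp (G.act (G.map φ y) ψ) = G.act y (φ.comp ψ) :=
    (G.act_comp y φ ψ).symm
  have hactive : (φ.comp ψ).Active := by
    have h2 : (G.act y (φ.comp ψ)).Active := by
      rw [← hcomp, ← hθψ]; exact hθ
    have h3 := act_active G y⁻¹ _ h2
    rwa [CIG.act_act_inv] at h3
  have hK : G.map ψ u ∈ K.K (φ.comp ψ) := hu2 l ψ hactive
  rw [hθψ, hcomp, conj_map G φ ψ y u hu1]
  refine (K.conj_act (φ.comp ψ) y _).mpr ⟨G.map ψ u, hK, ?_⟩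
  rw [G.map_comp φ ψ y]

theorem map_act_inv {m n : ℕ} (φ : NablaHom m n) (y : G.grp n) :
    G.map (G.act y φ) y⁻¹ = (G.map φ y)⁻¹ := by
  have key : G.map (G.act y φ) y⁻¹ * G.map φ y = 1 := by
    rw [← G.map_mul φ y⁻¹ y, inv_mul_cancel, CIG.map_one]
  exact eq_inv_of_mul_eq_one_left key

/-- The closure of a congruence family is a congruence family. -/
def closureFamily : CongruenceFamily G where
  K φ := closureSubgroup G K φ
  le_rst φ := fun _ hx => hx.1
  le_post {m n k} φ χ := by
    rintro x ⟨hx1, hx2⟩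
    refine ⟨?_, ?_⟩
    · intro l ψ
      show χ.comp (φ.comp (G.act x ψ)) = χ.comp (φ.comp ψ)
      rw [hx1 l ψ]
    · intro l ψ h
      have h' : (φ.comp ψ).Active := active_of_comp χ (φ.comp ψ) h
      exact K.le_post (φ.comp ψ) χ (hx2 l ψ h')
  map_pre {l m n} φ ψ := by
    rintro x ⟨hx1, hx2⟩
    refine ⟨?_, ?_⟩
    · intro l' θ
      calc (φ.comp ψ).comp (G.act (G.map ψ x) θ)
          = (φ.comp (G.act x ψ)).comp (G.act (G.map ψ x) θ) := by rw [hx1 _ ψ]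
        _ = φ.comp ((G.act x ψ).comp (G.act (G.map ψ x) θ)) := rfl
        _ = φ.comp (G.act x (ψ.comp θ)) := by rw [← G.act_comp]
        _ = φ.comp (ψ.comp θ) := hx1 _ _
        _ = (φ.comp ψ).comp θ := rfl
    · intro l' θ h
      have h' : (φ.comp (ψ.comp θ)).Active := h
      have hm := hx2 l' (ψ.comp θ) h'
      rw [G.map_comp ψ θ x] at hm
      exact hm
  conj_act {m n} φ y x := by
    constructor
    · intro hx
      refine ⟨(G.map φ y)⁻¹ * x * G.map φ y, ?_, by group⟩
      have h := closure_conj G K (G.act y φ) y⁻¹ x hx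
      rwa [CIG.act_act_inv, map_act_inv, inv_inv] at h
    · rintro ⟨u, hu, rfl⟩
      exact closure_conj G K φ y u hu

end Closure

/-! ## Statement 9 -/

/-- Let `G` be a crossed interval group and `K` a congruence family on `G`.  Then the
closure `K̄`, defined by `K̄_φ := {x ∈ RSt^G_φ : ψ*(x) ∈ K_{φ∘ψ}` for every `ψ` such
that `φ∘ψ` is defined and active`}`, is again a congruence family on `G`. -/
theorem statement9 (G : CrossedIntervalGroup) (K : CongruenceFamily G) :
    ∃ C : CongruenceFamily G, ∀ {m n : ℕ} (φ : NablaHom m n),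
      (C.K φ : Set (G.grp m)) = closureSet G K φ := by
  exact ⟨closureFamily G K, fun _ => rfl⟩
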